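/- Let F = {(w_i, w_i*)}_{i=1}^n be a finite p-cyclically monotone operator with ⟨w_i − w_{i+1}, w_i* − w_{i+1}*⟩ = 0 for all i (indices mod n, with (w_{n+1},w_{n+1}*) = (w_1,w_1*)). Then the operator S whose graph is the union of the segments co{(w_i,w_i*),(w_{i+1},w_{i+1}*)} in X × X* is p-cyclically monotone, and its p-cyclically monotone polar coincides with that of F: S^{μ_p} = F^{μ_p}. -/
import Mathlib


open scoped BigOperators RealInnerProductSpace

/-- The cyclic sum `∑_{i=0}^{p} ⟨x_{i+1} - x_i, x_i*⟩` (indices mod `p+1`),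
in a real Hilbert space identified with its dual. -/
def cycSumH {X : Type*} [NormedAddCommGroup X] [InnerProductSpace ℝ X] (p : ℕ)
    (z : Fin (p + 1) → X × X) : ℝ :=
  ∑ i, ⟪(z (i + 1)).1 - (z i).1, (z i).2⟫

/-- `T` (identified with its graph) is `p`-cyclically monotone. -/
def CycMonoH {X : Type*} [NormedAddCommGroup X] [InnerProductSpace ℝ X] (p : ℕ)
    (T : Set (X × X)) : Prop :=
  ∀ z : Fin (p + 1) → X × X, (∀ i, z i ∈ T) → cycSumH p z ≤ 0

/-- The `p`-cyclically monotone polar of `T`. -/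
def cycPolarH {X : Type*} [NormedAddCommGroup X] [InnerProductSpace ℝ X] (p : ℕ)
    (T : Set (X × X)) : Set (X × X) :=
  {w | ∀ z : Fin (p + 1) → X × X,
    z 0 = w → (∀ i, i ≠ 0 → z i ∈ T) → cycSumH p z ≤ 0}

/-- Domain of a multivalued operator (graph). -/
def opDom {X Y : Type*} (T : Set (X × Y)) : Set X := {x | ∃ y, (x, y) ∈ T}

/-- Range of a multivalued operator (graph). -/
def opRan {X Y : Type*} (T : Set (X × Y)) : Set Y := {y | ∃ x, (x, y) ∈ T}

/-- Image of a multivalued operator (graph) at a point. -/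
def opIm {X Y : Type*} (T : Set (X × Y)) (x : X) : Set Y := {y | (x, y) ∈ T}

lemma inner_seg_quad {X : Type*} [NormedAddCommGroup X] [InnerProductSpace ℝ X]
    (c A1 A2 B1 B2 : X) (h : ⟪B1 - A1, B2 - A2⟫ = (0:ℝ)) (t : ℝ) :
    ⟪c - ((1-t)•A1 + t•B1), (1-t)•A2 + t•B2⟫ =
      (1-t) * ⟪c - A1, A2⟫ + t * ⟪c - B1, B2⟫ := by
  simp only [inner_sub_left, inner_add_left, inner_add_right, inner_sub_right,
    real_inner_smul_left, real_inner_smul_right] at h ⊢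
  linear_combination (t - t^2) * h

lemma cycSumH_update_affine {X : Type*} [NormedAddCommGroup X] [InnerProductSpace ℝ X]
    (p : ℕ) (z : Fin (p + 1) → X × X) (j : Fin (p + 1)) (A B : X × X)
    (h : ⟪B.1 - A.1, B.2 - A.2⟫ = (0:ℝ)) (t : ℝ) :
    cycSumH p (Function.update z j ((1-t)•A + t•B)) =
      (1-t) * cycSumH p (Function.update z j A) + t * cycSumH p (Function.update z j B) := by
  simp only [cycSumH, Finset.mul_sum, ← Finset.sum_add_distrib]
  refine Finset.sum_congr rfl fun i _ => ?_
  by_cases hi1 : i + 1 = j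
  · by_cases hi : i = j
    · have e : i + 1 = i := by rw [hi1, hi]
      rw [e]
      subst hi
      simp [Function.update_self]
    · rw [hi1]
      simp only [Function.update_self, Function.update_of_ne hi]
      simp only [Prod.fst_add, Prod.smul_fst, inner_sub_left, inner_add_left,
        real_inner_smul_left]
      ring
  · by_cases hi : i = j
    · subst hi
      rw [Function.update_of_ne hi1, Function.update_of_ne hi1, Function.update_of_ne hi1]
      simp only [Function.update_self]
      have := inner_seg_quad (z (i+1)).1 A.1 A.2 B.1 B.2 h t
      simpa using this
    · rw [Function.update_of_ne hi1, Function.update_of_ne hi1, Function.update_of_ne hi1,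
        Function.update_of_ne hi, Function.update_of_ne hi, Function.update_of_ne hi]
      ring

/-- Reduction: points on the segments can be moved to the vertices without
decreasing the cyclic sum. -/
lemma cycSumH_reduce {X : Type*} [NormedAddCommGroup X] [InnerProductSpace ℝ X]
    (p n : ℕ) (w : Fin (n + 1) → X × X)
    (horth : ∀ i : Fin (n + 1), ⟪(w i).1 - (w (i + 1)).1, (w i).2 - (w (i + 1)).2⟫ = (0 : ℝ))
    (s : Finset (Fin (p + 1))) (z : Fin (p + 1) → X × X)
    (hz : ∀ i ∈ s, z i ∈ ⋃ k : Fin (n + 1), segment ℝ (w k) (w (k + 1))) :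
    ∃ z' : Fin (p + 1) → X × X, (∀ i ∈ s, z' i ∈ Set.range w) ∧
      (∀ i ∉ s, z' i = z i) ∧ cycSumH p z ≤ cycSumH p z' := by
  induction s using Finset.induction_on generalizing z with
  | empty => exact ⟨z, by simp, fun _ _ => rfl, le_refl _⟩
  | @insert j s hj ih =>
    obtain ⟨k, hk⟩ := Set.mem_iUnion.1 (hz j (Finset.mem_insert_self j s))
    obtain ⟨a, b, ha, hb, hab, hx⟩ := hk
    have horth' : ⟪(w (k+1)).1 - (w k).1, (w (k+1)).2 - (w k).2⟫ = (0:ℝ) := by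
      rw [← neg_sub (w k).1, ← neg_sub (w k).2, inner_neg_neg]
      exact horth k
    have ha' : a = 1 - b := by linarith
    have hupd : Function.update z j ((1-b) • (w k) + b • (w (k+1))) = z := by
      rw [← ha', hx, Function.update_eq_self]
    have haff := cycSumH_update_affine p z j (w k) (w (k+1)) horth' b
    rw [hupd] at haff
    set SA := cycSumH p (Function.update z j (w k)) with hSA
    set SB := cycSumH p (Function.update z j (w (k+1))) with hSB
    have hmax : cycSumH p z ≤ max SA SB := by
      rcases le_total SA SB with hle | hle
      · have : cycSumH p z ≤ SB := by rw [haff]; nlinarith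
        exact this.trans (le_max_right _ _)
      · have : cycSumH p z ≤ SA := by rw [haff]; nlinarith
        exact this.trans (le_max_left _ _)
    -- choose the better vertex
    obtain ⟨v, hv, hvle⟩ : ∃ v ∈ Set.range w,
        cycSumH p z ≤ cycSumH p (Function.update z j v) := by
      rcases le_total SA SB with hle | hle
      · exact ⟨w (k+1), ⟨k+1, rfl⟩, by rw [← hSB]; simpa [hle] using hmax⟩
      · exact ⟨w k, ⟨k, rfl⟩, by rw [← hSA]; simpa [max_eq_left hle] using hmax⟩
    set z₁ := Function.update z j v with hz₁
    have hz₁s : ∀ i ∈ s, z₁ i ∈ ⋃ k : Fin (n + 1), segment ℝ (w k) (w (k + 1)) := by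
      intro i hi
      have hij : i ≠ j := fun h => hj (h ▸ hi)
      rw [hz₁, Function.update_of_ne hij]
      exact hz i (Finset.mem_insert_of_mem hi)
    obtain ⟨z', hz'1, hz'2, hz'3⟩ := ih z₁ hz₁s
    refine ⟨z', ?_, ?_, hvle.trans hz'3⟩
    · intro i hi
      rcases Finset.mem_insert.1 hi with rfl | hi
      · rw [hz'2 i hj, hz₁, Function.update_self]; exact hv
      · exact hz'1 i hi
    · intro i hi
      have hij : i ≠ j := fun h => hi (h ▸ Finset.mem_insert_self j s)
      have his : i ∉ s := fun h => hi (Finset.mem_insert_of_mem h)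
      rw [hz'2 i his, hz₁, Function.update_of_ne hij]

theorem segments_cycMono_and_polar_eq {X : Type*} [NormedAddCommGroup X]
    [InnerProductSpace ℝ X] (p n : ℕ) (w : Fin (n + 1) → X × X)
    (hmono : CycMonoH p (Set.range w))
    (horth : ∀ i : Fin (n + 1), ⟪(w i).1 - (w (i + 1)).1, (w i).2 - (w (i + 1)).2⟫ = (0 : ℝ)) :
    CycMonoH p (⋃ i : Fin (n + 1), segment ℝ (w i) (w (i + 1))) ∧
      cycPolarH p (⋃ i : Fin (n + 1), segment ℝ (w i) (w (i + 1))) =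
        cycPolarH p (Set.range w) := by
  set S := ⋃ i : Fin (n + 1), segment ℝ (w i) (w (i + 1)) with hSdef
  have hrange : Set.range w ⊆ S := by
    rintro x ⟨i, rfl⟩
    exact Set.mem_iUnion.2 ⟨i, left_mem_segment ℝ _ _⟩
  constructor
  · intro z hz
    obtain ⟨z', hz'1, _, hz'3⟩ :=
      cycSumH_reduce p n w horth Finset.univ z (fun i _ => hz i)
    exact hz'3.trans (hmono z' fun i => hz'1 i (Finset.mem_univ i))
  · ext x
    constructor
    · intro hx z hz0 hzi
      exact hx z hz0 fun i hi => hrange (hzi i hi)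
    · intro hx z hz0 hzi
      obtain ⟨z', hz'1, hz'2, hz'3⟩ :=
        cycSumH_reduce p n w horth (Finset.univ.erase 0) z
          (fun i hi => hzi i (Finset.mem_erase.1 hi).1)
      refine hz'3.trans (hx z' ?_ ?_)
      · rw [hz'2 0 (fun h => (Finset.mem_erase.1 h).1 rfl), hz0]
      · intro i hi
        exact hz'1 i (Finset.mem_erase.2 ⟨hi, Finset.mem_univ i⟩)
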